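/- Let N ≥ 3, let Γ = {γ₁,…,γ_{2N−1}} ⊂ ℝ consist of 2N−1 distinct points and Γ' = {γ'₁,…,γ'_{2N−5}} ⊂ ℝ consist of 2N−5 distinct points. Suppose p, q are complex polynomials of degree at most N−1 satisfying |p(γ)| = |q(γ)| for all γ ∈ Γ and |p'(γ')| = |q'(γ')| for all γ' ∈ Γ'. Then there exists a unimodular ζ ∈ ℂ such that q = ζ·p or q = ζ·p̄, where p̄ is the polynomial with conjugated coefficients. -/

import Mathlib

open Complex Polynomial

noncomputable def pbar (p : Polynomial ℂ) : Polynomial ℂ := p.map (starRingEnd ℂ)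

lemma pbar_eval (p : Polynomial ℂ) (x : ℝ) :
    (pbar p).eval (x : ℂ) = starRingEnd ℂ (p.eval (x : ℂ)) := by
  rw [pbar, eval_map, eval₂_eq_sum, eval_eq_sum, Polynomial.sum_def, Polynomial.sum_def, map_sum]
  refine Finset.sum_congr rfl fun k hk => ?_
  simp [Complex.conj_ofReal]

lemma pbar_pbar (p : Polynomial ℂ) : pbar (pbar p) = p := by
  simp [pbar, Polynomial.map_map]

lemma pbar_natDegree (p : Polynomial ℂ) : (pbar p).natDegree = p.natDegree :=
  Polynomial.natDegree_map_eq_of_injective (starRingEnd ℂ).injective p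

lemma pbar_ne_zero {p : Polynomial ℂ} (hp : p ≠ 0) : pbar p ≠ 0 := by
  intro h
  apply hp
  rw [← pbar_pbar p, h, pbar, Polynomial.map_zero]

lemma pbar_mul (p q : Polynomial ℂ) : pbar (p * q) = pbar p * pbar q := by
  simp [pbar, Polynomial.map_mul]

lemma pbar_add (p q : Polynomial ℂ) : pbar (p + q) = pbar p + pbar q := by
  simp [pbar, Polynomial.map_add]

lemma pbar_C (z : ℂ) : pbar (C z) = C (starRingEnd ℂ z) := by
  simp [pbar]

lemma pbar_deriv (p : Polynomial ℂ) : pbar (derivative p) = derivative (pbar p) := by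
  simp [pbar, derivative_map]

lemma pbar_dvd {p q : Polynomial ℂ} (h : p ∣ q) : pbar p ∣ pbar q := by
  obtain ⟨c, rfl⟩ := h; exact ⟨pbar c, pbar_mul p c⟩

lemma vanish (s : Finset ℝ) (F : Polynomial ℂ) (hd : F.natDegree < s.card)
    (h : ∀ γ ∈ s, F.eval (γ : ℂ) = 0) : F = 0 := by
  classical
  refine Polynomial.eq_zero_of_natDegree_lt_card_of_eval_eq_zero F
    (f := fun i : s => ((i : ℝ) : ℂ)) (fun i j hij => ?_) (fun i => h i i.2) ?_
  · exact Subtype.ext (Complex.ofReal_injective (by simpa using hij))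
  · simpa [Fintype.card_coe] using hd

lemma eval_zero_of_abs_eq {f g : Polynomial ℂ} {γ : ℝ}
    (h : ‖f.eval (γ : ℂ)‖ = ‖g.eval (γ : ℂ)‖) :
    (f * pbar f - g * pbar g).eval (γ : ℂ) = 0 := by
  have h2 : Complex.normSq (f.eval (γ : ℂ)) = Complex.normSq (g.eval (γ : ℂ)) := by
    rw [← Complex.sq_norm, ← Complex.sq_norm, h]
  simp only [eval_sub, eval_mul, pbar_eval, Complex.mul_conj, h2, sub_self]

lemma wron_zero {f g : Polynomial ℂ} (hf : f ≠ 0)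
    (h : f * derivative g = derivative f * g) : ∃ c : ℂ, g = C c * f := by
  classical
  by_cases hg : g = 0
  · exact ⟨0, by simp [hg]⟩
  set r := GCDMonoid.gcd f g with hr
  have hrne : r ≠ 0 := gcd_ne_zero_of_left hf
  set f₁ := f / r with hf₁
  set g₁ := g / r with hg₁
  have hfr : f = r * f₁ := (EuclideanDomain.mul_div_cancel' hrne (gcd_dvd_left f g)).symm
  have hgr : g = r * g₁ := (EuclideanDomain.mul_div_cancel' hrne (gcd_dvd_right f g)).symm
  have hcop : IsCoprime f₁ g₁ := isCoprime_div_gcd_div_gcd hg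
  have hf₁ne : f₁ ≠ 0 := fun h0 => hf (by rw [hfr, h0, mul_zero])
  have hg₁ne : g₁ ≠ 0 := fun h0 => hg (by rw [hgr, h0, mul_zero])
  have key : f₁ * derivative g₁ = derivative f₁ * g₁ := by
    have h2 : r * (r * (f₁ * derivative g₁)) = r * (r * (derivative f₁ * g₁)) := by
      have := h
      rw [hfr, hgr] at this
      rw [derivative_mul, derivative_mul] at this
      ring_nf at this ⊢
      linear_combination this
    exact mul_left_cancel₀ hrne (mul_left_cancel₀ hrne h2)
  have hdvd : f₁ ∣ derivative f₁ := by
    have : f₁ ∣ derivative f₁ * g₁ := ⟨derivative g₁, key.symm⟩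
    exact hcop.dvd_of_dvd_mul_right this
  have hdf₁ : derivative f₁ = 0 := by
    by_contra hne
    have h1 : f₁.natDegree ≤ (derivative f₁).natDegree :=
      Polynomial.natDegree_le_of_dvd hdvd hne
    have h2 : (derivative f₁).natDegree < f₁.natDegree := by
      apply Polynomial.natDegree_derivative_lt
      intro h0
      exact hne (by rw [Polynomial.eq_C_of_natDegree_eq_zero h0]; simp)
    omega
  have hdg₁ : derivative g₁ = 0 := by
    have := key
    rw [hdf₁, zero_mul] at this
    exact (mul_eq_zero.mp this).resolve_left hf₁ne
  obtain ⟨k₀, hk₀⟩ : ∃ c, f₁ = C c := ⟨f₁.coeff 0,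
    Polynomial.eq_C_of_natDegree_eq_zero (Polynomial.natDegree_eq_zero_of_derivative_eq_zero hdf₁)⟩
  obtain ⟨k₁, hk₁⟩ : ∃ c, g₁ = C c := ⟨g₁.coeff 0,
    Polynomial.eq_C_of_natDegree_eq_zero (Polynomial.natDegree_eq_zero_of_derivative_eq_zero hdg₁)⟩
  have hk₀ne : k₀ ≠ 0 := fun h0 => hf₁ne (by rw [hk₀, h0, map_zero])
  refine ⟨k₁ / k₀, ?_⟩
  rw [hgr, hk₁, hfr, hk₀]
  rw [mul_comm (C (k₁/k₀)) _, mul_assoc, ← map_mul]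
  congr 2
  field_simp

lemma mul_conj_one_of_pbar_smul {f : Polynomial ℂ} (hf : f ≠ 0) {lam : ℂ}
    (h : pbar f = C lam * f) : lam * starRingEnd ℂ lam = 1 := by
  have h2 : f = C (starRingEnd ℂ lam) * (C lam * f) := by
    have h2 := congrArg pbar h
    rw [pbar_pbar, pbar_mul, pbar_C, h] at h2
    exact h2
  rw [← mul_assoc, ← map_mul] at h2
  have h3 : (C (starRingEnd ℂ lam * lam) - 1) * f = 0 := by
    rw [sub_mul, one_mul, ← h2, sub_self]
  have h4 : C (starRingEnd ℂ lam * lam) - 1 = 0 := by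
    rcases mul_eq_zero.mp h3 with h' | h'
    · exact h'
    · exact absurd h' hf
  have h5 : (starRingEnd ℂ lam * lam : ℂ) = 1 := by
    have := sub_eq_zero.mp h4
    exact C_injective (by rw [this, map_one])
  rw [mul_comm]
  exact h5

lemma abs_one_of_mul_conj {z : ℂ} (h : z * starRingEnd ℂ z = 1) : ‖z‖ = 1 := by
  have h1 : (Complex.normSq z : ℂ) = 1 := by rw [← Complex.mul_conj]; exact h
  have h2 : Complex.normSq z = 1 := by exact_mod_cast h1
  have h3 : ‖z‖ ^ 2 = 1 := by rw [Complex.sq_norm]; exact h2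
  nlinarith [norm_nonneg z]

lemma wdeg (f : Polynomial ℂ) :
    (derivative f * pbar f - f * derivative (pbar f)).natDegree ≤ 2 * f.natDegree - 2 := by
  classical
  rw [pbar]
  set σ := starRingEnd ℂ
  set d := f.natDegree with hd
  by_cases hd0 : d = 0
  · obtain ⟨c, rfl⟩ : ∃ c, f = C c := ⟨f.coeff 0, Polynomial.eq_C_of_natDegree_eq_zero hd0⟩
    simp
  have hd1 : 1 ≤ d := Nat.one_le_iff_ne_zero.mpr hd0
  have hmap : (f.map σ).natDegree = d :=
    Polynomial.natDegree_map_eq_of_injective (starRingEnd ℂ).injective f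
  have hder : (derivative f).natDegree ≤ d - 1 := by
    have := Polynomial.natDegree_derivative_lt (p := f) hd0
    omega
  have hderm : (derivative (f.map σ)).natDegree ≤ d - 1 := by
    have h0 : (f.map σ).natDegree ≠ 0 := by omega
    have := Polynomial.natDegree_derivative_lt h0
    omega
  rw [Polynomial.natDegree_le_iff_coeff_eq_zero]
  intro m hm
  rw [Polynomial.coeff_sub]
  by_cases hcase : m = 2 * d - 1
  · subst hcase
    have e1 : 2 * d - 1 = (d - 1) + d := by omega
    have key : ∀ g : Polynomial ℂ, (derivative g).coeff (d - 1) = g.coeff d * (d : ℂ) := by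
      intro g
      rw [Polynomial.coeff_derivative, show d - 1 + 1 = d by omega]
      congr 1
      push_cast [Nat.cast_sub hd1]
      ring
    rw [e1, Polynomial.coeff_mul_add_eq_of_natDegree_le hder hmap.le,
      show d - 1 + d = d + (d - 1) by omega,
      Polynomial.coeff_mul_add_eq_of_natDegree_le le_rfl hderm, key, key]
    simp only [Polynomial.coeff_map]
    ring
  · have hm2 : 2 * d ≤ m := by omega
    have c1 : (derivative f * f.map σ).coeff m = 0 := by
      apply Polynomial.coeff_eq_zero_of_natDegree_lt
      calc (derivative f * f.map σ).natDegree ≤ (derivative f).natDegree + (f.map σ).natDegree :=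
            Polynomial.natDegree_mul_le
        _ < m := by omega
    have c2 : (f * derivative (f.map σ)).coeff m = 0 := by
      apply Polynomial.coeff_eq_zero_of_natDegree_lt
      calc (f * derivative (f.map σ)).natDegree ≤ f.natDegree + (derivative (f.map σ)).natDegree :=
            Polynomial.natDegree_mul_le
        _ < m := by omega
    rw [c1, c2, sub_zero]

theorem stmt_8 (N : ℕ) (hN : 3 ≤ N) (Γ Γ' : Finset ℝ)
    (hΓ : Γ.card = 2 * N - 1) (hΓ' : Γ'.card = 2 * N - 5)
    (p q : Polynomial ℂ) (hp : p.natDegree ≤ N - 1) (hq : q.natDegree ≤ N - 1)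
    (h1 : ∀ γ ∈ Γ, ‖p.eval (γ : ℂ)‖ = ‖q.eval (γ : ℂ)‖)
    (h2 : ∀ γ ∈ Γ', ‖(Polynomial.derivative p).eval (γ : ℂ)‖ =
        ‖(Polynomial.derivative q).eval (γ : ℂ)‖) :
    ∃ ζ : ℂ, ‖ζ‖ = 1 ∧
      (q = Polynomial.C ζ * p ∨ q = Polynomial.C ζ * p.map (starRingEnd ℂ)) := by
  classical
  -- Fact A
  have hFA : p * pbar p = q * pbar q := by
    rw [← sub_eq_zero]
    apply vanish Γ _ ?_ (fun γ hγ => eval_zero_of_abs_eq (h1 γ hγ))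
    have l1 : (p * pbar p).natDegree ≤ p.natDegree + p.natDegree := by
      refine Polynomial.natDegree_mul_le.trans ?_
      rw [pbar_natDegree]
    have l2 : (q * pbar q).natDegree ≤ q.natDegree + q.natDegree := by
      refine Polynomial.natDegree_mul_le.trans ?_
      rw [pbar_natDegree]
    have := Polynomial.natDegree_sub_le (p * pbar p) (q * pbar q)
    omega
  by_cases hp0 : p = 0
  · refine ⟨1, by simp, Or.inl ?_⟩
    have : q * pbar q = 0 := by rw [← hFA, hp0, zero_mul]
    rcases mul_eq_zero.mp this with h' | h'
    · rw [h', hp0, mul_zero]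
    · have : q = 0 := by
        by_contra hq0
        exact pbar_ne_zero hq0 h'
      rw [this, hp0, mul_zero]
  have hq0 : q ≠ 0 := by
    intro h0
    apply hp0
    have : p * pbar p = 0 := by rw [hFA, h0, zero_mul]
    rcases mul_eq_zero.mp this with h' | h'
    · exact h'
    · by_contra hpp; exact pbar_ne_zero hpp h'
  -- gcd decomposition
  set u := GCDMonoid.gcd p q with hu
  have hune : u ≠ 0 := gcd_ne_zero_of_left hp0
  set a := p / u with hadef
  set b := q / u with hbdef
  have hpa : p = u * a := (EuclideanDomain.mul_div_cancel' hune (gcd_dvd_left p q)).symm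
  have hqb : q = u * b := (EuclideanDomain.mul_div_cancel' hune (gcd_dvd_right p q)).symm
  have hcop : IsCoprime a b := isCoprime_div_gcd_div_gcd hq0
  have hane : a ≠ 0 := fun h0 => hp0 (by rw [hpa, h0, mul_zero])
  have hbne : b ≠ 0 := fun h0 => hq0 (by rw [hqb, h0, mul_zero])
  -- a * pbar a = b * pbar b
  have hFA' : a * pbar a = b * pbar b := by
    have hcancel : (u * pbar u) * (a * pbar a) = (u * pbar u) * (b * pbar b) := by
      have := hFA
      rw [hpa, hqb, pbar_mul, pbar_mul] at this
      ring_nf at this ⊢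
      linear_combination this
    exact mul_left_cancel₀ (mul_ne_zero hune (pbar_ne_zero hune)) hcancel
  -- b = C c * pbar a
  have hba : b ∣ pbar a := by
    have h' : b ∣ a * pbar a := by rw [hFA']; exact ⟨pbar b, rfl⟩
    exact (hcop.symm).dvd_of_dvd_mul_left h'
  have hab : pbar a ∣ b := by
    have h' : a ∣ b * pbar b := by rw [← hFA']; exact ⟨pbar a, rfl⟩
    have h'' : a ∣ pbar b := hcop.dvd_of_dvd_mul_left h'
    have := pbar_dvd h''
    rwa [pbar_pbar] at this
  obtain ⟨v, hv⟩ := hab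
  obtain ⟨w, hw⟩ := hba
  have hpane : pbar a ≠ 0 := pbar_ne_zero hane
  have hvw : v * w = 1 := by
    have : pbar a * (v * w) = pbar a * 1 := by
      rw [mul_one, ← mul_assoc, ← hv, ← hw]
    exact mul_left_cancel₀ hpane this
  obtain ⟨c, hcunit, hcv⟩ := Polynomial.isUnit_iff.mp (IsUnit.of_mul_eq_one w hvw)
  have hcne : c ≠ 0 := hcunit.ne_zero
  have hbca : b = C c * pbar a := by rw [hv, ← hcv]; ring
  -- |c| = 1
  have hcc : c * starRingEnd ℂ c = 1 := by
    have h'' : (1 - C (c * starRingEnd ℂ c)) * (a * pbar a) = 0 := by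
      have hthis := hFA'
      rw [hbca, pbar_mul, pbar_C, pbar_pbar] at hthis
      rw [map_mul]
      linear_combination hthis
    rcases mul_eq_zero.mp h'' with h3 | h3
    · have := sub_eq_zero.mp h3
      exact (C_injective (by rw [← this, map_one])).symm
    · exact absurd h3 (mul_ne_zero hane hpane)
  have hcabs : ‖c‖ = 1 := abs_one_of_mul_conj hcc
  have hq' : q = C c * (u * pbar a) := by rw [hqb, hbca]; ring
  -- the derivative identity
  set D := derivative p * pbar (derivative p) - derivative q * pbar (derivative q) with hDdef
  have hD : D = (derivative u * pbar u - u * pbar (derivative u)) *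
      (a * pbar (derivative a) - derivative a * pbar a) := by
    have hC : (C c) * (C (starRingEnd ℂ c)) = 1 := by
      rw [← map_mul, hcc, map_one]
    have e1 : derivative p = derivative u * a + u * derivative a := by
      rw [hpa, derivative_mul]
    have e2 : derivative q = C c * (derivative u * pbar a + u * pbar (derivative a)) := by
      rw [hq', derivative_mul, derivative_mul, derivative_C, zero_mul, zero_add, pbar_deriv]
    rw [hDdef, e1, e2]
    simp only [pbar_mul, pbar_add, pbar_C, pbar_pbar]
    linear_combination (-((derivative u * pbar a + u * pbar (derivative a)) *
      (pbar (derivative u) * a + pbar u * derivative a))) * hC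
  by_cases hWu : derivative u * pbar u - u * pbar (derivative u) = 0
  · -- u is (up to constant) real : q = ζ * pbar p
    have hrel : u * derivative (pbar u) = derivative u * pbar u := by
      rw [← pbar_deriv]
      exact (sub_eq_zero.mp hWu).symm
    obtain ⟨lam, hlam⟩ := wron_zero hune hrel
    have hlc : lam * starRingEnd ℂ lam = 1 := mul_conj_one_of_pbar_smul hune hlam
    have hlabs : ‖lam‖ = 1 := abs_one_of_mul_conj hlc
    refine ⟨c * starRingEnd ℂ lam, ?_, Or.inr ?_⟩
    · rw [norm_mul, hcabs, Complex.norm_conj, hlabs, one_mul]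
    · have hpbarp : p.map (starRingEnd ℂ) = C lam * (u * pbar a) := by
        have : pbar p = pbar u * pbar a := by rw [hpa, pbar_mul]
        rw [show p.map (starRingEnd ℂ) = pbar p from rfl, this, hlam]
        ring
      rw [hpbarp, hq']
      have hstep : C (c * starRingEnd ℂ lam) * (C lam * (u * pbar a)) =
          C (c * (starRingEnd ℂ lam * lam)) * (u * pbar a) := by
        rw [map_mul, map_mul, map_mul]
        ring
      rw [hstep, mul_comm (starRingEnd ℂ lam) lam, hlc, mul_one]
  by_cases hWa : a * pbar (derivative a) - derivative a * pbar a = 0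
  · -- a is (up to constant) real : q = ζ * p
    have hrel : a * derivative (pbar a) = derivative a * pbar a := by
      rw [← pbar_deriv]
      exact sub_eq_zero.mp hWa
    obtain ⟨mu, hmu⟩ := wron_zero hane hrel
    have hmc : mu * starRingEnd ℂ mu = 1 := mul_conj_one_of_pbar_smul hane hmu
    have hmabs : ‖mu‖ = 1 := abs_one_of_mul_conj hmc
    refine ⟨c * mu, ?_, Or.inl ?_⟩
    · rw [norm_mul, hcabs, hmabs, one_mul]
    · rw [hq', hmu, hpa, map_mul]
      ring
  -- contradiction case
  exfalso
  have hDne : D ≠ 0 := by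
    rw [hD]
    exact mul_ne_zero hWu hWa
  apply hDne
  apply vanish Γ' D ?_ (fun γ hγ => eval_zero_of_abs_eq (h2 γ hγ))
  -- degree bound
  have hdu : 1 ≤ u.natDegree := by
    by_contra h'
    apply hWu
    have h0 : u.natDegree = 0 := by omega
    obtain ⟨k, hk⟩ : ∃ k, u = C k := ⟨u.coeff 0, Polynomial.eq_C_of_natDegree_eq_zero h0⟩
    rw [hk]
    simp [pbar]
  have hda : 1 ≤ a.natDegree := by
    by_contra h'
    apply hWa
    have h0 : a.natDegree = 0 := by omega
    obtain ⟨k, hk⟩ : ∃ k, a = C k := ⟨a.coeff 0, Polynomial.eq_C_of_natDegree_eq_zero h0⟩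
    rw [hk]
    simp [pbar]
  have hsum : u.natDegree + a.natDegree ≤ N - 1 := by
    have := Polynomial.natDegree_mul hune hane
    rw [← this, ← hpa]
    exact hp
  have hb1 : (derivative u * pbar u - u * pbar (derivative u)).natDegree
      ≤ 2 * u.natDegree - 2 := by
    have := wdeg u
    rwa [← pbar_deriv] at this
  have hb2 : (a * pbar (derivative a) - derivative a * pbar a).natDegree
      ≤ 2 * a.natDegree - 2 := by
    have := wdeg a
    rw [← pbar_deriv] at this
    have hswap : a * pbar (derivative a) - derivative a * pbar a =
        -(derivative a * pbar a - a * pbar (derivative a)) := by ring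
    rw [hswap, Polynomial.natDegree_neg]
    exact this
  have hDdeg : D.natDegree ≤ (2 * u.natDegree - 2) + (2 * a.natDegree - 2) := by
    rw [hD]
    exact Polynomial.natDegree_mul_le.trans (add_le_add hb1 hb2)
  omega
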